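/- Along trajectories of the 3D trace dynamics m₂' = -2m₃, m₃' = -(1/2)m₂², the region {(m₂, m₃) : m₂³ > 6m₃²} is positively invariant. -/

import Mathlib

/-- Positive invariance of the supercritical region `{m₂³ > 6 m₃²}` for the
3D trace dynamics. -/
theorem stmt_8 (T : ℝ) (m2 m3 : ℝ → ℝ)
    (h2 : ∀ t ∈ Set.Ico (0:ℝ) T, HasDerivAt m2 (-2 * m3 t) t)
    (h3 : ∀ t ∈ Set.Ico (0:ℝ) T, HasDerivAt m3 (-(1/2) * (m2 t)^2) t)
    (h0 : (0:ℝ) ∈ Set.Ico (0:ℝ) T)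
    (hinit : 6 * (m3 0)^2 < (m2 0)^3) :
    ∀ t ∈ Set.Ico (0:ℝ) T, 6 * (m3 t)^2 < (m2 t)^3 := by
  set F : ℝ → ℝ := fun t => (m2 t)^3 - 6 * (m3 t)^2 with hF
  have hFderiv : ∀ t ∈ Set.Ico (0:ℝ) T, HasDerivAt F 0 t := by
    intro t ht
    have := (((h2 t ht).fun_pow 3).sub (((h3 t ht).fun_pow 2).const_mul 6))
    refine this.congr_deriv ?_
    ring
  intro t ht
  have hsub : Set.Ico (0:ℝ) t ⊆ Set.Ico (0:ℝ) T := by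
    intro x hx
    exact ⟨hx.1, lt_trans hx.2 ht.2⟩
  have hconst : F t = F 0 := by
    rcases eq_or_lt_of_le ht.1 with h | h
    · rw [← h]
    · have := eq_of_has_deriv_right_eq (a := 0) (b := t)
        (f' := fun _ => (0:ℝ)) (f := F) (g := fun _ => F 0)
        (fun x hx => ((hFderiv x (hsub hx)).hasDerivWithinAt))
        (fun x _ => (hasDerivWithinAt_const x _ (F 0)).congr_deriv rfl)
        ?_ continuousOn_const rfl
      · exact this t ⟨ht.1, le_refl t⟩
      · intro x hx
        exact ((hFderiv x ⟨hx.1, lt_of_le_of_lt hx.2 ht.2⟩).continuousAt).continuousWithinAt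
  have : 0 < F 0 := by simp [hF]; linarith
  have : 0 < F t := hconst ▸ this
  simp [hF] at this
  linarith
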